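/- Every finite word w has at most |w|+1 distinct palindromic factors (counting the empty word). -/

import Mathlib

open List

variable {A : Type*}

/-- All factors (contiguous subwords) of a word, as a list. -/
def Factors (w : List A) : List (List A) := w.tails.flatMap List.inits

/-- The set of distinct palindromic factors of `w` (including the empty word). -/
def palFactors [DecidableEq A] (w : List A) : Finset (List A) :=
  ((Factors w).filter (fun u => decide (u.reverse = u))).toFinset

/-- A word is rich if it has exactly `|w| + 1` distinct palindromic factors. -/
def IsRich [DecidableEq A] (w : List A) : Prop :=
  (palFactors w).card = w.length + 1

/-- The defect of a finite word. -/
def defect [DecidableEq A] (w : List A) : ℕ :=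
  w.length + 1 - (palFactors w).card

/-- `u` is a (finite) factor of the infinite word `z`. -/
def FactorOfInf (u : List A) (z : ℕ → A) : Prop :=
  ∃ i, u = (List.range u.length).map (fun k => z (i + k))

/-- An infinite word is rich if all of its finite factors are rich. -/
def InfRich [DecidableEq A] (z : ℕ → A) : Prop :=
  ∀ u : List A, FactorOfInf u z → IsRich u

/-- The longest palindromic suffix of `w`. -/
def lps [DecidableEq A] (w : List A) : List A :=
  (w.tails.find? (fun u => decide (u.reverse = u))).getD []

/-- The number of occurrences of `u` as a factor of `w` (counted by position). -/
def occCount [DecidableEq A] (u w : List A) : ℕ :=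
  w.tails.countP (fun t => decide (u <+: t))

/-- The periodic infinite word `u^∞`. -/
def periodicWord (u : List A) (hu : u ≠ []) : ℕ → A :=
  fun i => u.get ⟨i % u.length, Nat.mod_lt _ (List.length_pos_of_ne_nil hu)⟩


lemma mem_palFactors [DecidableEq A] {u w : List A} :
    u ∈ palFactors w ↔ u <:+: w ∧ u.reverse = u := by
  simp [palFactors, Factors, List.mem_flatMap, List.mem_tails, List.mem_inits,
    List.infix_iff_prefix_suffix]
  tauto

lemma infix_of_middle {u w : List A} {a : A} (s t : List A) (ht : t ≠ [])
    (h : s ++ u ++ t = w ++ [a]) : u <:+: w := by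
  obtain ⟨t', b, rfl⟩ := (List.eq_nil_or_concat t).resolve_left ht
  have : s ++ u ++ t' = w := by
    have := congrArg List.dropLast h
    simpa [List.concat_eq_append, ← List.append_assoc, List.dropLast_concat] using this
  exact ⟨s, t', by simpa using this⟩

lemma new_pal_unique [DecidableEq A] {w : List A} {a : A} {u₁ u₂ : List A}
    (h1 : u₁ ∈ palFactors (w ++ [a])) (h2 : u₂ ∈ palFactors (w ++ [a]))
    (n1 : u₁ ∉ palFactors w) (n2 : u₂ ∉ palFactors w) : u₁ = u₂ := by
  rw [mem_palFactors] at h1 h2 n1 n2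
  obtain ⟨i1, p1⟩ := h1
  obtain ⟨i2, p2⟩ := h2
  have suf : ∀ u : List A, u <:+: w ++ [a] → u.reverse = u → ¬ (u <:+: w ∧ u.reverse = u) →
      u <:+ (w ++ [a]) := by
    intro u ⟨s, t, h⟩ pu hn
    rcases List.eq_nil_or_concat t with rfl | ⟨t', b, rfl⟩
    · exact ⟨s, by simpa using h⟩
    · exact absurd ⟨infix_of_middle s _ (by simp) h, pu⟩ hn
  have s1 := suf u₁ i1 p1 n1
  have s2 := suf u₂ i2 p2 n2
  have key : ∀ u v : List A, u <:+ (w ++ [a]) → v <:+ (w ++ [a]) → u.reverse = u →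
      v.reverse = v → u <:+ v → ¬ u <:+: w → u = v := by
    intro u v hu hv pu pv huv hnu
    by_contra hne
    have hpre : u <+: v := List.reverse_suffix.mp (by rw [pu, pv]; exact huv)
    obtain ⟨t, rfl⟩ := hpre
    have ht : t ≠ [] := by rintro rfl; simp at hne
    obtain ⟨s, hs⟩ := hv
    exact hnu (infix_of_middle s t ht (by rw [← hs]; simp))
  rcases List.suffix_or_suffix_of_suffix s1 s2 with h | h
  · exact key u₁ u₂ s1 s2 p1 p2 h (fun hc => n1 ⟨hc, p1⟩)
  · exact (key u₂ u₁ s2 s1 p2 p1 h (fun hc => n2 ⟨hc, p2⟩)).symm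

theorem palindromic_factors_le [DecidableEq A] (w : List A) :
    (palFactors w).card ≤ w.length + 1 := by
  induction w using List.reverseRecOn with
  | nil =>
    have : palFactors ([] : List A) = {[]} := by
      ext u; simp [mem_palFactors]; rintro rfl; simp
    simp [this]
  | append_singleton w a ih =>
    have hsub : palFactors (w ++ [a]) ⊆ palFactors w ∪ (palFactors (w ++ [a]) \ palFactors w) := by
      intro u hu
      by_cases h : u ∈ palFactors w <;> simp [h, hu]
    have hcard1 : (palFactors (w ++ [a]) \ palFactors w).card ≤ 1 := by
      apply Finset.card_le_one.mpr
      intro u hu v hv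
      simp only [Finset.mem_sdiff] at hu hv
      exact new_pal_unique hu.1 hv.1 hu.2 hv.2
    calc (palFactors (w ++ [a])).card
        ≤ (palFactors w ∪ (palFactors (w ++ [a]) \ palFactors w)).card :=
          Finset.card_le_card hsub
      _ ≤ (palFactors w).card + (palFactors (w ++ [a]) \ palFactors w).card :=
          Finset.card_union_le _ _
      _ ≤ (w.length + 1) + 1 := Nat.add_le_add ih hcard1
      _ = (w ++ [a]).length + 1 := by simp
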